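/- Equivalent form of Schröder's formula: for every n ≥ 1, G_n = (-1)^{n+1} ∫_1^∞ dt / ((log²(t-1) + π²) t^n). -/

import Mathlib

open MeasureTheory Real

noncomputable def G (n : ℕ) : ℝ :=
  (n.factorial : ℝ)⁻¹ * ∫ x in (0:ℝ)..1, ∏ k ∈ Finset.range n, (x - k)

lemma sin_exp_integral (L : ℝ) :
    ∫ s in (0:ℝ)..1, Real.exp (s * L) * Real.sin (π * s)
      = (Real.exp L + 1) * π / (L ^ 2 + π ^ 2) := by
  have hD : L ^ 2 + π ^ 2 ≠ 0 := by positivity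
  set F : ℝ → ℝ := fun s =>
    Real.exp (s * L) * (L * Real.sin (π * s) - π * Real.cos (π * s)) / (L ^ 2 + π ^ 2) with hF
  have hderiv : ∀ s ∈ Set.uIcc (0:ℝ) 1,
      HasDerivAt F (Real.exp (s * L) * Real.sin (π * s)) s := by
    intro s _
    have h1 : HasDerivAt (fun s : ℝ => s * L) L s := by
      simpa using (hasDerivAt_id s).mul_const L
    have h2 : HasDerivAt (fun s : ℝ => Real.exp (s * L)) (Real.exp (s * L) * L) s :=
      h1.exp
    have h3 : HasDerivAt (fun s : ℝ => π * s) π s := by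
      simpa using (hasDerivAt_id s).const_mul π
    have h4 : HasDerivAt (fun s : ℝ => Real.sin (π * s)) (Real.cos (π * s) * π) s := h3.sin
    have h5 : HasDerivAt (fun s : ℝ => Real.cos (π * s)) (-Real.sin (π * s) * π) s := h3.cos
    have h6 : HasDerivAt (fun s : ℝ => L * Real.sin (π * s) - π * Real.cos (π * s))
        (L * (Real.cos (π * s) * π) - π * (-Real.sin (π * s) * π)) s :=
      (h4.const_mul L).sub (h5.const_mul π)
    have h7 := (h2.mul h6).div_const (L ^ 2 + π ^ 2)
    refine h7.congr_deriv ?_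
    field_simp
    ring
  have hcont : IntervalIntegrable (fun s => Real.exp (s * L) * Real.sin (π * s)) volume 0 1 := by
    apply Continuous.intervalIntegrable
    continuity
  have := intervalIntegral.integral_eq_sub_of_hasDerivAt hderiv hcont
  rw [this]
  simp only [hF, one_mul, zero_mul, Real.exp_zero, mul_one, mul_zero, Real.sin_pi, Real.cos_pi,
    Real.sin_zero, Real.cos_zero]
  field_simp
  ring

lemma beta_eval (n : ℕ) {s : ℝ} (hs0 : 0 < s) (hsn : s < n) :
    ∫ v in (0:ℝ)..1, v ^ s * (1 - v) ^ ((n:ℝ) - 1 - s)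
      = Real.Gamma (s + 1) * Real.Gamma ((n:ℝ) - s) / n.factorial := by
  have hu : (0:ℝ) < (s + 1) := by linarith
  have hv : (0:ℝ) < ((n:ℝ) - s) := by linarith
  have key := Complex.Gamma_mul_Gamma_eq_betaIntegral
    (s := ((s:ℝ) + 1 : ℝ)) (t := ((n:ℝ) - s : ℝ)) (by simpa using hu) (by simpa using hv)
  have hsum : ((((s:ℝ) + 1 : ℝ)) : ℂ) + ((((n:ℝ) - s : ℝ)) : ℂ) = ((n + 1 : ℕ) : ℂ) := by
    push_cast; ring
  rw [hsum, show ((n+1:ℕ):ℂ) = (n:ℂ)+1 by push_cast; ring,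
    Complex.Gamma_nat_eq_factorial] at key
  have hbeta : Complex.betaIntegral (((s:ℝ) + 1 : ℝ)) ((((n:ℝ) - s : ℝ))) =
      ((∫ v in (0:ℝ)..1, v ^ s * (1 - v) ^ ((n:ℝ) - 1 - s) : ℝ) : ℂ) := by
    rw [Complex.betaIntegral, ← intervalIntegral.integral_ofReal]
    apply intervalIntegral.integral_congr
    intro x hx
    rw [Set.uIcc_of_le (by norm_num : (0:ℝ) ≤ 1)] at hx
    have hx0 : (0:ℝ) ≤ x := hx.1
    have hx1 : (0:ℝ) ≤ 1 - x := by linarith [hx.2]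
    push_cast
    rw [show (s:ℂ) + 1 - 1 = ((s:ℝ):ℂ) by ring,
      show (n:ℂ) - (s:ℂ) - 1 = (((n:ℝ) - 1 - s : ℝ):ℂ) by push_cast; ring,
      show (1 : ℂ) - (x:ℂ) = ((1 - x : ℝ):ℂ) by push_cast; ring,
      ← Complex.ofReal_cpow hx0, ← Complex.ofReal_cpow hx1]
  rw [hbeta] at key
  have h1 : Complex.Gamma (((s:ℝ) + 1 : ℝ)) = ((Real.Gamma (s+1) : ℝ) : ℂ) :=
    (Complex.Gamma_ofReal _)
  have h2 : Complex.Gamma ((((n:ℝ) - s : ℝ)) : ℂ) = ((Real.Gamma ((n:ℝ) - s) : ℝ) : ℂ) :=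
    (Complex.Gamma_ofReal _)
  rw [h1, h2] at key
  have : ((Real.Gamma (s+1) * Real.Gamma ((n:ℝ) - s) : ℝ) : ℂ)
      = (((n.factorial : ℝ) * ∫ v in (0:ℝ)..1, v ^ s * (1 - v) ^ ((n:ℝ) - 1 - s) : ℝ) : ℂ) := by
    push_cast
    linear_combination key
  have hreal := Complex.ofReal_inj.mp this
  have hfac : (n.factorial : ℝ) ≠ 0 := by positivity
  field_simp at hreal ⊢
  linarith [hreal]

lemma gamma_shift {s : ℝ} (hs1 : s < 1) (m : ℕ) :
    Real.Gamma (1 - s + m) = (∏ k ∈ Finset.range m, (1 - s + k)) * Real.Gamma (1 - s) := by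
  induction m with
  | zero => simp
  | succ m ih =>
    have hpos : (0:ℝ) < 1 - s + m := by
      have := Nat.cast_nonneg (α := ℝ) m
      linarith
    have : (1 - s + (m + 1 : ℕ) : ℝ) = (1 - s + m) + 1 := by push_cast; ring
    rw [this, Real.Gamma_add_one (ne_of_gt hpos), ih, Finset.prod_range_succ]
    ring

lemma gamma_prod (n : ℕ) (hn : 1 ≤ n) {s : ℝ} (hs0 : 0 < s) (hs1 : s < 1) :
    Real.sin (π * s) * (Real.Gamma (s + 1) * Real.Gamma ((n:ℝ) - s))
      = π * ((-1:ℝ) ^ (n + 1) * ∏ k ∈ Finset.range n, (s - k)) := by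
  have hrefl : Real.Gamma s * Real.Gamma (1 - s) = π / Real.sin (π * s) :=
    Real.Gamma_mul_Gamma_one_sub s
  have hsin : Real.sin (π * s) ≠ 0 := by
    have := Real.sin_pos_of_pos_of_lt_pi (x := π * s) (by positivity)
      (by nlinarith [Real.pi_pos])
    linarith
  have hrefl' : Real.Gamma s * Real.Gamma (1 - s) * Real.sin (π * s) = π := by
    rw [hrefl]; field_simp
  have hGs : Real.Gamma (s + 1) = s * Real.Gamma s := Real.Gamma_add_one (ne_of_gt hs0)
  have hn' : ((n:ℝ) - s) = 1 - s + (n - 1 : ℕ) := by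
    have h1 : (1:ℕ) ≤ n := hn
    push_cast [Nat.cast_sub h1]
    ring
  rw [hn', gamma_shift hs1, hGs]
  have hprod : ∏ k ∈ Finset.range n, (s - k)
      = s * ((-1:ℝ) ^ (n - 1) * ∏ k ∈ Finset.range (n - 1), (1 - s + k)) := by
    obtain ⟨m, rfl⟩ : ∃ m, n = m + 1 := ⟨n - 1, (Nat.succ_pred_eq_of_pos hn).symm⟩
    rw [Finset.prod_range_succ']
    simp only [Nat.add_sub_cancel, Nat.cast_zero, sub_zero]
    rw [Finset.prod_congr rfl
      (fun x _ => show s - ((x + 1 : ℕ) : ℝ) = (-1) * (1 - s + x) by push_cast; ring),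
      Finset.prod_mul_distrib, Finset.prod_const]
    simp [Finset.card_range]
    ring
  rw [hprod]
  have hpow : ((-1:ℝ) ^ (n + 1)) * ((-1:ℝ) ^ (n - 1)) = 1 := by
    rw [← pow_add]
    refine Even.neg_one_pow ?_
    obtain ⟨m, rfl⟩ : ∃ m, n = m + 1 := ⟨n - 1, (Nat.succ_pred_eq_of_pos hn).symm⟩
    simp only [Nat.add_sub_cancel]
    exact ⟨m + 1, by ring⟩
  set P := ∏ k ∈ Finset.range (n - 1), (1 - s + (k:ℝ)) with hP
  linear_combination (s * P) * hrefl' - (π * s * P) * hpow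

lemma subst_lemma (n : ℕ) :
    ∫ t in Set.Ioi (1:ℝ), 1 / (((Real.log (t - 1)) ^ 2 + π ^ 2) * t ^ n)
      = ∫ v in Set.Ioo (0:ℝ) 1,
          (1 - v) ^ ((n:ℝ) - 2) / ((Real.log (v / (1 - v))) ^ 2 + π ^ 2) := by
  have himg : (fun v : ℝ => (1 - v)⁻¹) '' Set.Ioo 0 1 = Set.Ioi 1 := by
    ext t
    constructor
    · rintro ⟨v, ⟨hv0, hv1⟩, rfl⟩
      have h1 : 0 < 1 - v := by linarith
      have h2 : 1 - v < 1 := by linarith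
      exact Set.mem_Ioi.mpr ((one_lt_inv₀ h1).mpr h2)
    · intro ht
      have ht1 : (1:ℝ) < t := ht
      have ht0 : (0:ℝ) < t := by linarith
      refine ⟨1 - t⁻¹, ⟨?_, ?_⟩, ?_⟩
      · have : t⁻¹ < 1 := by rw [inv_lt_one_iff₀]; right; exact ht1
        linarith
      · have : 0 < t⁻¹ := inv_pos.mpr ht0
        linarith
      · simp [inv_inv]
  have hderiv : ∀ v ∈ Set.Ioo (0:ℝ) 1,
      HasDerivWithinAt (fun v : ℝ => (1 - v)⁻¹) (((1 - v) ^ 2)⁻¹) (Set.Ioo 0 1) v := by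
    intro v hv
    have h1 : (1 : ℝ) - v ≠ 0 := by have := hv.2; intro h; linarith [hv.2]
    have h : HasDerivAt (fun v : ℝ => 1 - v) (-1) v := by
      simpa using (hasDerivAt_id v).const_sub 1
    have := h.inv h1
    have heq : -(-1) / (1 - v) ^ 2 = ((1 - v) ^ 2)⁻¹ := by field_simp
    exact (heq ▸ this).hasDerivWithinAt
  have hinj : Set.InjOn (fun v : ℝ => (1 - v)⁻¹) (Set.Ioo 0 1) := by
    intro a _ b _ h
    have : (1 : ℝ) - a = 1 - b := inv_injective h
    linarith
  rw [← himg, integral_image_eq_integral_abs_deriv_smul measurableSet_Ioo hderiv hinj]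
  refine setIntegral_congr_fun measurableSet_Ioo fun v hv => ?_
  obtain ⟨hv0, hv1⟩ := hv
  have h1 : (0:ℝ) < 1 - v := by linarith
  have hD : (0:ℝ) < (Real.log (v / (1 - v))) ^ 2 + π ^ 2 := by positivity
  have harg : (1 - v)⁻¹ - 1 = v / (1 - v) := by field_simp; ring
  have hpow : ((1 - v)⁻¹) ^ n = ((1 - v) ^ n)⁻¹ := by rw [inv_pow]
  have hrpow : (1 - v) ^ ((n:ℝ) - 2) = (1 - v) ^ n * ((1 - v) ^ 2)⁻¹ := by
    rw [Real.rpow_sub h1, show ((2:ℝ)) = ((2:ℕ):ℝ) by norm_num,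
      Real.rpow_natCast, Real.rpow_natCast]
    ring
  rw [smul_eq_mul, harg, hpow, hrpow]
  rw [abs_of_pos (by positivity : (0:ℝ) < ((1 - v) ^ 2)⁻¹)]
  field_simp

lemma inner_s (n : ℕ) {v : ℝ} (hv0 : 0 < v) (hv1 : v < 1) :
    ∫ s in (0:ℝ)..1, Real.sin (π * s) * (v ^ s * (1 - v) ^ ((n:ℝ) - 1 - s))
      = π * ((1 - v) ^ ((n:ℝ) - 2) / ((Real.log (v / (1 - v))) ^ 2 + π ^ 2)) := by
  have h1 : (0:ℝ) < 1 - v := by linarith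
  set w : ℝ := v / (1 - v) with hw
  have hwpos : 0 < w := div_pos hv0 h1
  have hptwise : ∀ s : ℝ, Real.sin (π * s) * (v ^ s * (1 - v) ^ ((n:ℝ) - 1 - s))
      = (1 - v) ^ ((n:ℝ) - 1) * (Real.exp (s * Real.log w) * Real.sin (π * s)) := by
    intro s
    have e1 : Real.exp (s * Real.log w) = w ^ s := by
      rw [Real.rpow_def_of_pos hwpos, mul_comm]
    have e2 : w ^ s = v ^ s / (1 - v) ^ s := Real.div_rpow hv0.le h1.le s
    have e3 : (1 - v) ^ ((n:ℝ) - 1 - s) = (1 - v) ^ ((n:ℝ) - 1) / (1 - v) ^ s := by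
      rw [Real.rpow_sub h1]
    rw [e1, e2, e3]
    have : ((1 - v) ^ s) ≠ 0 := ne_of_gt (Real.rpow_pos_of_pos h1 s)
    field_simp
  rw [intervalIntegral.integral_congr (fun s _ => hptwise s),
    intervalIntegral.integral_const_mul, sin_exp_integral]
  have hexp : Real.exp (Real.log w) = w := Real.exp_log hwpos
  rw [hexp]
  have hw1 : w + 1 = (1 - v)⁻¹ := by rw [hw]; field_simp; ring
  have hr : (1 - v) ^ ((n:ℝ) - 2) = (1 - v) ^ ((n:ℝ) - 1) * (1 - v)⁻¹ := by
    rw [show (n:ℝ) - 2 = ((n:ℝ) - 1) + (-1) by ring, Real.rpow_add h1,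
      Real.rpow_neg_one]
  rw [hw1, hr]
  have hD : (0:ℝ) < (Real.log w) ^ 2 + π ^ 2 := by positivity
  field_simp

lemma int_v (n : ℕ) (hn : 1 ≤ n) {s : ℝ} (hs0 : 0 < s) (hs1 : s < 1) :
    IntegrableOn (fun v : ℝ => Real.sin (π * s) * (v ^ s * (1 - v) ^ ((n:ℝ) - 1 - s)))
      (Set.Ioo 0 1) volume := by
  have hr : (-1:ℝ) < (n:ℝ) - 1 - s := by
    have : (1:ℝ) ≤ (n:ℝ) := by exact_mod_cast hn
    linarith
  have hdom : IntegrableOn (fun v : ℝ => (1 - v) ^ ((n:ℝ) - 1 - s)) (Set.Ioo 0 1) volume := by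
    have h := (intervalIntegral.intervalIntegrable_rpow' hr (a := 0) (b := 1)).comp_sub_left 1
    simp only [sub_zero, sub_self] at h
    have h2 : IntegrableOn (fun v : ℝ => (1 - v) ^ ((n:ℝ) - 1 - s)) (Set.Ioc 0 1) volume := by
      have := h.1
      simpa [Set.uIoc_of_le (show (0:ℝ) ≤ 1 by norm_num)] using
        (IntervalIntegrable.symm h).1
    exact h2.mono_set Set.Ioo_subset_Ioc_self
  refine hdom.integrable.mono' ?_ ?_
  · refine ContinuousOn.aestronglyMeasurable ?_ measurableSet_Ioo
    refine continuousOn_const.mul (ContinuousOn.mul ?_ ?_)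
    · intro v hv
      exact (Real.continuousAt_rpow_const v s (Or.inr hs0.le)).continuousWithinAt
    · intro v hv
      have hne : (1:ℝ) - v ≠ 0 := by have := hv.2; intro h; linarith [hv.2]
      exact ((Real.continuousAt_rpow_const (1 - v) ((n:ℝ) - 1 - s) (Or.inl hne)).comp
        ((continuous_const.sub continuous_id).continuousAt)).continuousWithinAt
  · rw [ae_restrict_iff' measurableSet_Ioo]
    filter_upwards with v hv
    obtain ⟨hv0, hv1⟩ := hv
    have h1 : (0:ℝ) < 1 - v := by linarith
    have hb1 : |Real.sin (π * s)| ≤ 1 := Real.abs_sin_le_one _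
    have hb2 : v ^ s ≤ 1 := Real.rpow_le_one hv0.le hv1.le hs0.le
    have hb3 : (0:ℝ) ≤ v ^ s := Real.rpow_nonneg hv0.le s
    have hb4 : (0:ℝ) ≤ (1 - v) ^ ((n:ℝ) - 1 - s) := Real.rpow_nonneg h1.le _
    rw [Real.norm_eq_abs, abs_mul, abs_mul, abs_of_nonneg hb3, abs_of_nonneg hb4]
    calc |Real.sin (π * s)| * (v ^ s * (1 - v) ^ ((n:ℝ) - 1 - s))
        ≤ 1 * (1 * (1 - v) ^ ((n:ℝ) - 1 - s)) := by gcongr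
      _ = (1 - v) ^ ((n:ℝ) - 1 - s) := by ring

theorem schroder_integral' (n : ℕ) (hn : 1 ≤ n) :
    G n = (-1 : ℝ) ^ (n + 1) *
      ∫ t in Set.Ioi (1:ℝ), 1 / (((Real.log (t - 1)) ^ 2 + π ^ 2) * t ^ n) := by
  have hπ : (0:ℝ) < π := Real.pi_pos
  have hfac : (0:ℝ) < (n.factorial : ℝ) := by positivity
  have hsq : ((-1:ℝ) ^ (n + 1)) * ((-1:ℝ) ^ (n + 1)) = 1 := by
    rw [← pow_add]
    exact Even.neg_one_pow ⟨n + 1, by ring⟩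
  set r : ℝ → ℝ → ℝ :=
    fun s v => Real.sin (π * s) * (v ^ s * (1 - v) ^ ((n:ℝ) - 1 - s)) with hrdef
  -- Step value: value of the inner v-integral for fixed s
  have hval : ∀ s ∈ Set.Ioo (0:ℝ) 1,
      ∫ v in Set.Ioo (0:ℝ) 1, r s v
        = π * ((-1:ℝ) ^ (n + 1) * ∏ k ∈ Finset.range n, (s - k)) / n.factorial := by
    intro s hs
    obtain ⟨hs0, hs1⟩ := hs
    have hsn : s < n := by
      have : (1:ℝ) ≤ (n:ℝ) := by exact_mod_cast hn
      linarith
    have hIoo : ∫ v in Set.Ioo (0:ℝ) 1, r s v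
        = Real.sin (π * s) * ∫ v in (0:ℝ)..1, v ^ s * (1 - v) ^ ((n:ℝ) - 1 - s) := by
      rw [intervalIntegral.integral_of_le (by norm_num : (0:ℝ) ≤ 1),
        MeasureTheory.integral_Ioc_eq_integral_Ioo,
        ← MeasureTheory.integral_const_mul]
    rw [hIoo, beta_eval n hs0 hsn]
    have hg := gamma_prod n hn hs0 hs1
    field_simp
    linear_combination hg
  -- Step A : express the product via the inner integral
  have stepA : ∀ s ∈ Set.Ioo (0:ℝ) 1,
      ∏ k ∈ Finset.range n, (s - k)
        = ((-1:ℝ) ^ (n + 1) * (n.factorial : ℝ) / π) * ∫ v in Set.Ioo (0:ℝ) 1, r s v := by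
    intro s hs
    rw [hval s hs]
    rw [show ((-1:ℝ) ^ (n + 1) * (n.factorial : ℝ) / π) *
        (π * ((-1:ℝ) ^ (n + 1) * ∏ k ∈ Finset.range n, (s - (k:ℝ))) / n.factorial)
        = (((-1:ℝ) ^ (n + 1)) * ((-1:ℝ) ^ (n + 1))) * (∏ k ∈ Finset.range n, (s - (k:ℝ)))
            * (π / π) * ((n.factorial : ℝ) / n.factorial) by ring]
    rw [hsq, div_self (ne_of_gt hπ), div_self (ne_of_gt hfac)]
    ring
  -- product bound
  have hPbound : ∀ s ∈ Set.Ioo (0:ℝ) 1,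
      |∏ k ∈ Finset.range n, (s - (k:ℝ))| ≤ (n.factorial : ℝ) := by
    intro s hs
    obtain ⟨hs0, hs1⟩ := hs
    rw [Finset.abs_prod]
    have : (n.factorial : ℝ) = ∏ k ∈ Finset.range n, ((k:ℝ) + 1) := by
      rw [← Finset.prod_range_add_one_eq_factorial]
      push_cast
      rfl
    rw [this]
    refine Finset.prod_le_prod (fun k _ => abs_nonneg _) fun k _ => ?_
    rw [abs_le]
    have hk : (0:ℝ) ≤ (k:ℝ) := Nat.cast_nonneg k
    constructor <;> linarith
  -- measurability of r on the product
  have hmeas : AEStronglyMeasurable (Function.uncurry r)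
      ((volume.restrict (Set.Ioo (0:ℝ) 1)).prod (volume.restrict (Set.Ioo (0:ℝ) 1))) := by
    rw [Measure.prod_restrict]
    refine ContinuousOn.aestronglyMeasurable ?_ (measurableSet_Ioo.prod measurableSet_Ioo)
    intro p hp
    obtain ⟨⟨hs0, hs1⟩, ⟨hv0, hv1⟩⟩ := hp
    have hsin : ContinuousAt (fun p : ℝ × ℝ => Real.sin (π * p.1)) p :=
      (Real.continuous_sin.comp (continuous_const.mul continuous_fst)).continuousAt
    have h1 : ContinuousAt (fun p : ℝ × ℝ => p.2 ^ p.1) p := by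
      have h := ContinuousAt.comp (f := fun x : ℝ × ℝ => (x.2, x.1))
        (Real.continuousAt_rpow (p.2, p.1) (Or.inl (ne_of_gt hv0)))
        ((continuous_snd.prodMk continuous_fst).continuousAt)
      exact h
    have h2 : ContinuousAt (fun p : ℝ × ℝ => (1 - p.2) ^ ((n:ℝ) - 1 - p.1)) p := by
      have hb : (1:ℝ) - p.2 ≠ 0 := by intro h; linarith
      have h := ContinuousAt.comp (f := fun x : ℝ × ℝ => (1 - x.2, (n:ℝ) - 1 - x.1))
        (Real.continuousAt_rpow (1 - p.2, (n:ℝ) - 1 - p.1) (Or.inl hb))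
        (((continuous_const.sub continuous_snd).prodMk
          (continuous_const.sub continuous_fst)).continuousAt)
      exact h
    exact (hsin.mul (h1.mul h2)).continuousWithinAt
  -- integrability on the product
  have hint : Integrable (Function.uncurry r)
      ((volume.restrict (Set.Ioo (0:ℝ) 1)).prod (volume.restrict (Set.Ioo (0:ℝ) 1))) := by
    rw [MeasureTheory.integrable_prod_iff hmeas]
    constructor
    · rw [ae_restrict_iff' measurableSet_Ioo]
      filter_upwards with s hs
      exact int_v n hn hs.1 hs.2
    · have hm2 : AEStronglyMeasurable
          (fun s => ∫ v, ‖r s v‖ ∂(volume.restrict (Set.Ioo (0:ℝ) 1)))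
          (volume.restrict (Set.Ioo (0:ℝ) 1)) :=
        hmeas.norm.integral_prod_right'
      refine Integrable.mono' (integrable_const π) hm2 ?_
      rw [ae_restrict_iff' measurableSet_Ioo]
      filter_upwards with s hs
      obtain ⟨hs0, hs1⟩ := hs
      simp only [Function.uncurry_apply_pair]
      have hsin0 : 0 ≤ Real.sin (π * s) := by
        have := Real.sin_pos_of_pos_of_lt_pi (x := π * s) (by positivity)
          (by nlinarith)
        linarith
      have hnn : ∀ v ∈ Set.Ioo (0:ℝ) 1, ‖r s v‖ = r s v := by
        intro v hv
        obtain ⟨hv0, hv1⟩ := hv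
        have h1 : (0:ℝ) < 1 - v := by linarith
        have : 0 ≤ r s v := by
          apply mul_nonneg hsin0
          exact mul_nonneg (Real.rpow_nonneg hv0.le _) (Real.rpow_nonneg h1.le _)
        rw [Real.norm_eq_abs, abs_of_nonneg this]
      have heq : ∫ v, ‖r s v‖ ∂(volume.restrict (Set.Ioo (0:ℝ) 1))
          = ∫ v in Set.Ioo (0:ℝ) 1, r s v := by
        refine setIntegral_congr_fun measurableSet_Ioo fun v hv => hnn v hv
      rw [Real.norm_eq_abs, heq, hval s ⟨hs0, hs1⟩]
      rw [abs_div, abs_mul, abs_of_pos hπ, abs_mul, abs_pow, abs_neg, abs_one, one_pow,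
        one_mul, abs_of_pos hfac]
      rw [div_le_iff₀ hfac]
      calc π * |∏ k ∈ Finset.range n, (s - (k:ℝ))|
          ≤ π * (n.factorial : ℝ) := by
            exact mul_le_mul_of_nonneg_left (hPbound s ⟨hs0, hs1⟩) hπ.le
        _ = π * (n.factorial : ℝ) := rfl
  -- Fubini
  have hswap : (∫ s in Set.Ioo (0:ℝ) 1, ∫ v in Set.Ioo (0:ℝ) 1, r s v)
      = ∫ v in Set.Ioo (0:ℝ) 1, ∫ s in Set.Ioo (0:ℝ) 1, r s v :=
    MeasureTheory.integral_integral_swap hint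
  -- inner s-integral
  have stepC : ∀ v ∈ Set.Ioo (0:ℝ) 1,
      ∫ s in Set.Ioo (0:ℝ) 1, r s v
        = π * ((1 - v) ^ ((n:ℝ) - 2) / ((Real.log (v / (1 - v))) ^ 2 + π ^ 2)) := by
    intro v hv
    rw [← MeasureTheory.integral_Ioc_eq_integral_Ioo,
      ← intervalIntegral.integral_of_le (by norm_num : (0:ℝ) ≤ 1)]
    exact inner_s n hv.1 hv.2
  -- assemble
  have hG1 : G n = (n.factorial : ℝ)⁻¹ *
      ∫ s in Set.Ioo (0:ℝ) 1, ∏ k ∈ Finset.range n, (s - (k:ℝ)) := by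
    rw [G, intervalIntegral.integral_of_le (by norm_num : (0:ℝ) ≤ 1),
      MeasureTheory.integral_Ioc_eq_integral_Ioo]
  rw [hG1, setIntegral_congr_fun measurableSet_Ioo stepA, MeasureTheory.integral_const_mul,
    hswap, setIntegral_congr_fun measurableSet_Ioo stepC, MeasureTheory.integral_const_mul,
    subst_lemma n]
  set I := ∫ v in Set.Ioo (0:ℝ) 1,
      (1 - v) ^ ((n:ℝ) - 2) / ((Real.log (v / (1 - v))) ^ 2 + π ^ 2) with hI
  field_simp
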